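/- The function D(x) = −((1+16x)/4)·₃F₂(1, 1, 1; 3/2, 3/2; 1+16x) satisfies L·D = 1 + 16x on the interval where |1+16x| < 1 (i.e., −1/8 < x < 0), where L = x(1+16x)²·d²/dx² + (1+16x)²·d/dx − 4. -/

import Mathlib

open Finset

/-- Pochhammer symbol `(a)_k = a(a+1)⋯(a+k-1)`. -/
noncomputable def poch (a : ℝ) (k : ℕ) : ℝ := ∏ i ∈ Finset.range k, (a + i)

/-- `₃F₂(1,1,1; 3/2,3/2; w) = ∑_k (k!)²/((3/2)_k)² wᵏ`. -/
noncomputable def hyp3F2 (w : ℝ) : ℝ :=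
  ∑' k : ℕ, ((k.factorial : ℝ)) ^ 2 / (poch (3 / 2) k) ^ 2 * w ^ k

/-- `D(x) = −((1+16x)/4) ₃F₂(1,1,1; 3/2,3/2; 1+16x)`. -/
noncomputable def Dcatalan (x : ℝ) : ℝ :=
  -((1 + 16 * x) / 4) * hyp3F2 (1 + 16 * x)

/-! ### Auxiliary definitions -/

noncomputable def cc (k : ℕ) : ℝ := ((k.factorial : ℝ)) ^ 2 / (poch (3 / 2) k) ^ 2

noncomputable def ff1 (w : ℝ) : ℝ := ∑' k : ℕ, cc k * ((k : ℝ) * w ^ (k - 1))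

noncomputable def ff2 (w : ℝ) : ℝ :=
  ∑' k : ℕ, cc k * ((k : ℝ) * (((k - 1 : ℕ) : ℝ) * w ^ (k - 2)))

lemma hyp3F2_eq : hyp3F2 = fun w => ∑' k : ℕ, cc k * w ^ k := rfl

lemma poch_pos (k : ℕ) : 0 < poch (3 / 2) k :=
  Finset.prod_pos (fun i _ => by positivity)

lemma fact_le_poch (k : ℕ) : (k.factorial : ℝ) ≤ poch (3 / 2) k := by
  have h : (k.factorial : ℝ) = ∏ i ∈ Finset.range k, ((i : ℝ) + 1) := by
    rw [← Finset.prod_range_add_one_eq_factorial k]; push_cast; rfl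
  rw [h]
  unfold poch
  apply Finset.prod_le_prod
  · intro i _; positivity
  · intro i _; linarith

lemma cc_nonneg (k : ℕ) : 0 ≤ cc k := by
  unfold cc; positivity

lemma cc_le_one (k : ℕ) : cc k ≤ 1 := by
  unfold cc
  have hp := poch_pos k
  rw [div_le_one (by positivity)]
  have h1 : (0:ℝ) ≤ (k.factorial : ℝ) := by positivity
  have := fact_le_poch k
  nlinarith

lemma abs_cc_le_one (k : ℕ) : |cc k| ≤ 1 := by
  rw [abs_of_nonneg (cc_nonneg k)]; exact cc_le_one k

lemma cc_zero : cc 0 = 1 := by simp [cc, poch]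

/-- The key coefficient recurrence. -/
lemma cc_rec (k : ℕ) : cc (k + 1) * (2 * (k : ℝ) + 3) ^ 2 = 4 * cc k * ((k : ℝ) + 1) ^ 2 := by
  have hp := poch_pos k
  have hps : poch (3 / 2) (k + 1) = poch (3 / 2) k * (3 / 2 + k) := by
    unfold poch; rw [Finset.prod_range_succ]
  unfold cc
  rw [hps, Nat.factorial_succ]
  push_cast
  field_simp
  ring

/-! ### Summability helpers -/

lemma sumU1 {r : ℝ} (h0 : 0 < r) (h1 : r < 1) : Summable fun k : ℕ => (k : ℝ) * r ^ (k - 1) := by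
  have hgeom : Summable fun n : ℕ => (n : ℝ) * r ^ n := by
    simpa using summable_pow_mul_geometric_of_norm_lt_one 1 (r := r)
      (by rwa [Real.norm_eq_abs, abs_of_pos h0])
  refine Summable.of_nonneg_of_le (fun k => by positivity) (fun k => ?_)
    (hgeom.mul_left (1 / r))
  rcases k with _ | k
  · simp
  · have : (1 / r) * (((k+1 : ℕ) : ℝ) * r ^ (k+1)) = ((k+1 : ℕ) : ℝ) * r ^ k := by
      rw [pow_succ]; field_simp
    rw [this]
    simp

lemma sumU2 {r : ℝ} (h0 : 0 < r) (h1 : r < 1) :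
    Summable fun k : ℕ => (k : ℝ) ^ 2 * r ^ (k - 2) := by
  have hgeom : Summable fun n : ℕ => (n : ℝ) ^ 2 * r ^ n :=
    summable_pow_mul_geometric_of_norm_lt_one 2 (r := r)
      (by rwa [Real.norm_eq_abs, abs_of_pos h0])
  refine Summable.of_nonneg_of_le (fun k => by positivity) (fun k => ?_)
    (hgeom.mul_left (1 / r ^ 2))
  rcases k with _ | _ | k
  · simp
  · have h2 : ((1:ℕ):ℝ) ^ 2 * r ^ (1 - 2) = 1 := by norm_num
    have h3 : (1 / r ^ 2) * (((1:ℕ):ℝ) ^ 2 * r ^ 1) = 1 / r := by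
      push_cast; field_simp
    rw [h2, h3]
    rw [le_div_iff₀ h0]; linarith
  · have : (1 / r ^ 2) * (((k+2 : ℕ) : ℝ) ^ 2 * r ^ (k+2)) = ((k+2 : ℕ) : ℝ) ^ 2 * r ^ k := by
      rw [pow_add]; field_simp
    rw [this]
    apply le_of_eq; push_cast; ring

lemma bound0 {y r : ℝ} (hy : |y| ≤ r) (k : ℕ) : ‖cc k * y ^ k‖ ≤ r ^ k := by
  rw [Real.norm_eq_abs, abs_mul, abs_pow]
  calc |cc k| * |y| ^ k ≤ 1 * r ^ k := by
        gcongr <;> first | exact abs_cc_le_one k | exact abs_nonneg y | exact hy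
    _ = r ^ k := one_mul _

lemma bound1 {y r : ℝ} (hy : |y| ≤ r) (k : ℕ) :
    ‖cc k * ((k : ℝ) * y ^ (k - 1))‖ ≤ (k : ℝ) * r ^ (k - 1) := by
  rw [Real.norm_eq_abs, abs_mul, abs_mul, abs_pow, Nat.abs_cast]
  calc |cc k| * ((k : ℝ) * |y| ^ (k-1)) ≤ 1 * ((k : ℝ) * r ^ (k-1)) := by
        gcongr <;> first | exact abs_cc_le_one k | exact abs_nonneg y | exact hy
    _ = (k : ℝ) * r ^ (k - 1) := one_mul _

lemma bound2 {y r : ℝ} (hy : |y| ≤ r) (k : ℕ) :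
    ‖cc k * ((k : ℝ) * (((k - 1 : ℕ) : ℝ) * y ^ (k - 2)))‖ ≤ (k : ℝ) ^ 2 * r ^ (k - 2) := by
  rw [Real.norm_eq_abs, abs_mul, abs_mul, abs_mul, abs_pow, Nat.abs_cast, Nat.abs_cast]
  have h1 : ((k - 1 : ℕ) : ℝ) ≤ (k : ℝ) := by exact_mod_cast Nat.sub_le k 1
  calc |cc k| * ((k : ℝ) * (((k-1:ℕ) : ℝ) * |y| ^ (k-2)))
      ≤ 1 * ((k : ℝ) * ((k : ℝ) * r ^ (k-2))) := by
        gcongr <;>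
          first | exact abs_cc_le_one k | exact abs_nonneg y | exact hy | exact h1
    _ = (k : ℝ) ^ 2 * r ^ (k - 2) := by ring

/-! ### Term-by-term differentiation -/

lemma hasDerivAt_hyp3F2 {w : ℝ} (hw : |w| < 1) : HasDerivAt hyp3F2 (ff1 w) w := by
  set r : ℝ := (|w| + 1) / 2 with hr
  have h0 : 0 < r := by positivity
  have h1 : r < 1 := by rw [hr]; linarith
  have hwr : |w| < r := by rw [hr]; linarith
  have hmem : w ∈ Set.Ioo (-r) r := by rw [Set.mem_Ioo, ← abs_lt]; exact hwr
  rw [hyp3F2_eq]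
  exact hasDerivAt_tsum_of_isPreconnected (sumU1 h0 h1) isOpen_Ioo
    (convex_Ioo _ _).isPreconnected
    (fun k y _ => (hasDerivAt_pow k y).const_mul (cc k))
    (fun k y hy => bound1 (le_of_lt (abs_lt.2 ⟨hy.1, hy.2⟩)) k)
    hmem
    (Summable.of_norm_bounded (summable_geometric_of_lt_one (abs_nonneg w) hw)
      (bound0 le_rfl))
    hmem

lemma hasDerivAt_ff1 {w : ℝ} (hw : |w| < 1) : HasDerivAt ff1 (ff2 w) w := by
  set r : ℝ := (|w| + 1) / 2 with hr
  have h0 : 0 < r := by positivity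
  have h1 : r < 1 := by rw [hr]; linarith
  have hwr : |w| < r := by rw [hr]; linarith
  have hmem : w ∈ Set.Ioo (-r) r := by rw [Set.mem_Ioo, ← abs_lt]; exact hwr
  unfold ff1
  exact hasDerivAt_tsum_of_isPreconnected (sumU2 h0 h1) isOpen_Ioo
    (convex_Ioo _ _).isPreconnected
    (fun k y _ => by
      have h := (hasDerivAt_pow (k - 1) y).const_mul (cc k * (k : ℝ))
      have hsub : k - 1 - 1 = k - 2 := by omega
      rw [hsub] at h
      simpa [mul_assoc] using h)
    (fun k y hy => bound2 (le_of_lt (abs_lt.2 ⟨hy.1, hy.2⟩)) k)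
    hmem
    (Summable.of_norm_bounded (sumU1 h0 h1) (fun k => bound1 hwr.le k))
    hmem


set_option maxHeartbeats 1000000 in
lemma sumU3 {r : ℝ} (h0 : 0 < r) (h1 : r < 1) :
    Summable fun k : ℕ => (2 * (k : ℝ) + 1) ^ 2 * r ^ (k + 1) := by
  have hgeom : Summable fun n : ℕ => (n : ℝ) ^ 2 * r ^ n :=
    summable_pow_mul_geometric_of_norm_lt_one 2 (r := r)
      (by rwa [Real.norm_eq_abs, abs_of_pos h0])
  have hsh : Summable fun n : ℕ => ((n + 1 : ℕ) : ℝ) ^ 2 * r ^ (n + 1) :=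
    (summable_nat_add_iff 1).2 hgeom
  refine Summable.of_nonneg_of_le (fun k => by positivity) (fun k => ?_) (hsh.mul_left 9)
  have hrp : (0:ℝ) ≤ r ^ (k + 1) := by positivity
  have : ((k + 1 : ℕ) : ℝ) = (k : ℝ) + 1 := by push_cast; ring
  rw [this]
  nlinarith [Nat.cast_nonneg (α := ℝ) k]

set_option maxHeartbeats 1000000 in
lemma key_identity {w : ℝ} (hw : |w| < 1) :
    (w - 4 * w ^ 2) * hyp3F2 w + (8 * w ^ 2 - 12 * w ^ 3) * ff1 w
      + (4 * w ^ 3 - 4 * w ^ 4) * ff2 w = w := by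
  set r : ℝ := (|w| + 1) / 2 with hr
  have h0 : 0 < r := by positivity
  have h1 : r < 1 := by rw [hr]; linarith
  have hwr : |w| ≤ r := by rw [hr]; linarith
  have hs0 : Summable fun k : ℕ => cc k * w ^ k :=
    Summable.of_norm_bounded (summable_geometric_of_lt_one h0.le h1) (bound0 hwr)
  have hs1 : Summable fun k : ℕ => cc k * ((k : ℝ) * w ^ (k - 1)) :=
    Summable.of_norm_bounded (sumU1 h0 h1) (bound1 hwr)
  have hs2 : Summable fun k : ℕ => cc k * ((k : ℝ) * (((k - 1 : ℕ) : ℝ) * w ^ (k - 2))) :=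
    Summable.of_norm_bounded (sumU2 h0 h1) (bound2 hwr)
  have ha : Summable fun k : ℕ => cc k * (2 * (k : ℝ) + 1) ^ 2 * w ^ (k + 1) := by
    refine Summable.of_norm_bounded (sumU3 h0 h1) (fun k => ?_)
    rw [Real.norm_eq_abs, abs_mul, abs_mul, abs_pow, abs_pow]
    have h2 : |2 * (k : ℝ) + 1| = 2 * (k : ℝ) + 1 := abs_of_nonneg (by positivity)
    rw [h2]
    calc |cc k| * (2 * (k : ℝ) + 1) ^ 2 * |w| ^ (k + 1)
        ≤ 1 * (2 * (k : ℝ) + 1) ^ 2 * r ^ (k + 1) := by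
          gcongr <;> first | exact abs_cc_le_one k | exact abs_nonneg w | exact hwr
      _ = (2 * (k : ℝ) + 1) ^ 2 * r ^ (k + 1) := by ring
  have hash : Summable fun k : ℕ => cc (k + 1) * (2 * ((k + 1 : ℕ) : ℝ) + 1) ^ 2 * w ^ (k + 1 + 1) :=
    (summable_nat_add_iff 1).2 ha
  rw [hyp3F2_eq]
  simp only [ff1, ff2]
  rw [← tsum_mul_left, ← tsum_mul_left, ← tsum_mul_left,
    ← Summable.tsum_add (hs0.mul_left _) (hs1.mul_left _),
    ← Summable.tsum_add ((hs0.mul_left _).add (hs1.mul_left _)) (hs2.mul_left _)]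
  have hterm : ∀ k : ℕ,
      (w - 4 * w ^ 2) * (cc k * w ^ k)
        + (8 * w ^ 2 - 12 * w ^ 3) * (cc k * ((k : ℝ) * w ^ (k - 1)))
        + (4 * w ^ 3 - 4 * w ^ 4) * (cc k * ((k : ℝ) * (((k - 1 : ℕ) : ℝ) * w ^ (k - 2))))
      = cc k * (2 * (k : ℝ) + 1) ^ 2 * w ^ (k + 1)
        - cc (k + 1) * (2 * ((k + 1 : ℕ) : ℝ) + 1) ^ 2 * w ^ (k + 1 + 1) := by
    intro k
    rcases k with _ | _ | k
    · have h := cc_rec 0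
      push_cast at h ⊢
      simp only [cc_zero] at h ⊢
      linear_combination (w ^ 2) * h
    · have h := cc_rec 1
      push_cast at h ⊢
      norm_num
      linear_combination (w ^ 3) * h
    · have h := cc_rec (k + 2)
      have e1 : k + 2 - 1 = k + 1 := rfl
      have e2 : k + 2 - 2 = k := rfl
      rw [e1, e2]
      push_cast at h ⊢
      linear_combination (w ^ (k + 4)) * h
  rw [tsum_congr hterm, Summable.tsum_sub ha hash, Summable.tsum_eq_zero_add ha]
  have ha0 : cc 0 * (2 * ((0 : ℕ) : ℝ) + 1) ^ 2 * w ^ (0 + 1) = w := by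
    simp [cc_zero]
  rw [ha0]
  ring

set_option maxHeartbeats 1000000 in
/-- **`D` solves the inhomogeneous equation `L·D = 1 + 16x`** on the interval
`(−1/8, 0)`, where `L = x(1+16x)² d²/dx² + (1+16x)² d/dx − 4`. -/
theorem stmt_15 :
    ∀ x : ℝ, x ∈ Set.Ioo (-(1 : ℝ) / 8) 0 →
      x * (1 + 16 * x) ^ 2 * deriv (deriv Dcatalan) x +
          (1 + 16 * x) ^ 2 * deriv Dcatalan x - 4 * Dcatalan x = 1 + 16 * x := by
  intro x hx
  obtain ⟨hx1, hx2⟩ := hx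
  have hw : |1 + 16 * x| < 1 := by rw [abs_lt]; constructor <;> linarith
  have hlin : ∀ y : ℝ, HasDerivAt (fun z : ℝ => 1 + 16 * z) 16 y := by
    intro y
    simpa using ((hasDerivAt_id y).const_mul (16 : ℝ)).const_add 1
  have hD : ∀ y : ℝ, y ∈ Set.Ioo (-(1 : ℝ) / 8) 0 →
      HasDerivAt Dcatalan
        (-4 * hyp3F2 (1 + 16 * y) - 4 * (1 + 16 * y) * ff1 (1 + 16 * y)) y := by
    intro y hy
    have hwy : |1 + 16 * y| < 1 := by
      rw [abs_lt]; exact ⟨by linarith [hy.1], by linarith [hy.2]⟩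
    have hH : HasDerivAt (fun z : ℝ => hyp3F2 (1 + 16 * z)) (ff1 (1 + 16 * y) * 16) y :=
      by have h := (hasDerivAt_hyp3F2 hwy).comp y (hlin y); exact h
    have hmul : HasDerivAt (fun z : ℝ => -((1 + 16 * z) / 4)) (-(16 / 4) : ℝ) y :=
      ((hlin y).div_const 4).neg
    have h := hmul.mul hH
    show HasDerivAt (fun z : ℝ => -((1 + 16 * z) / 4) * hyp3F2 (1 + 16 * z)) _ y
    refine h.congr_deriv ?_
    ring
  have hD2 : HasDerivAt
      (fun y : ℝ => -4 * hyp3F2 (1 + 16 * y) - 4 * (1 + 16 * y) * ff1 (1 + 16 * y))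
      (-128 * ff1 (1 + 16 * x) - 64 * (1 + 16 * x) * ff2 (1 + 16 * x)) x := by
    have hH : HasDerivAt (fun z : ℝ => hyp3F2 (1 + 16 * z)) (ff1 (1 + 16 * x) * 16) x :=
      by have h := (hasDerivAt_hyp3F2 hw).comp x (hlin x); exact h
    have hF : HasDerivAt (fun z : ℝ => ff1 (1 + 16 * z)) (ff2 (1 + 16 * x) * 16) x :=
      by have h := (hasDerivAt_ff1 hw).comp x (hlin x); exact h
    have h := (hH.const_mul (-4 : ℝ)).sub (((hlin x).const_mul 4).mul hF)
    refine h.congr_deriv ?_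
    ring
  have hxm : x ∈ Set.Ioo (-(1 : ℝ) / 8) 0 := ⟨hx1, hx2⟩
  have hev : deriv Dcatalan =ᶠ[nhds x]
      fun y => -4 * hyp3F2 (1 + 16 * y) - 4 * (1 + 16 * y) * ff1 (1 + 16 * y) :=
    Filter.eventuallyEq_of_mem (isOpen_Ioo.mem_nhds hxm) (fun y hy => (hD y hy).deriv)
  have h2 : deriv (deriv Dcatalan) x
      = -128 * ff1 (1 + 16 * x) - 64 * (1 + 16 * x) * ff2 (1 + 16 * x) := by
    rw [hev.deriv_eq, hD2.deriv]
  rw [h2, (hD x hxm).deriv]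
  unfold Dcatalan
  linear_combination key_identity hw
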